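/- Let V, A_1,…,A_m, c, n, H, Ric be as in the setting, with n ≥ 4. Assume Ric(X) > (n(n−1)/(n+2))(c+H²) for every unit vector X ∈ V. Then for every orthonormal basis e_1,…,e_n of V, Σ_{j=2}^n (2·Σ_{α=1}^m ⟨A_α e_1, e_j⟩² − Σ_{α=1}^m ⟨A_α e_1, e_1⟩⟨A_α e_j, e_j⟩) < (n−1)c. (Strict pointwise estimate in the proof of Lemma 3.) -/

import Mathlib

open scoped RealInnerProductSpace

/-- The Ricci curvature at a point of a submanifold, expressed through the shape
operators `A_α` via the Gauss equation: for a unit vector `X`,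
`Ric X = (n-1)c + Σ_α tr(A_α)⟨A_α X, X⟩ − Σ_α ‖A_α X‖²`. -/
noncomputable def RicCurv {V : Type*} [NormedAddCommGroup V] [InnerProductSpace ℝ V]
    (m n : ℕ) (c : ℝ) (A : Fin m → V →ₗ[ℝ] V) (X : V) : ℝ :=
  ((n : ℝ) - 1) * c + (∑ α : Fin m, LinearMap.trace ℝ V (A α) * ⟪(A α) X, X⟫)
    - ∑ α : Fin m, ‖(A α) X‖ ^ 2

/-- The Lawson–Simons quantity `Θ_p` associated to an orthonormal basis
`e_1, …, e_n` and an integer `p`: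
`Θ_p = Σ_{i≤p} Σ_{j>p} (2 Σ_α ⟨A_α e_i, e_j⟩² − Σ_α ⟨A_α e_i, e_i⟩⟨A_α e_j, e_j⟩)`. -/
noncomputable def Theta {V : Type*} [NormedAddCommGroup V] [InnerProductSpace ℝ V]
    (m : ℕ) {n : ℕ} (p : ℕ) (A : Fin m → V →ₗ[ℝ] V)
    (e : OrthonormalBasis (Fin n) ℝ V) : ℝ :=
  ∑ i ∈ Finset.univ.filter (fun i : Fin n => (i : ℕ) < p),
    ∑ j ∈ Finset.univ.filter (fun j : Fin n => p ≤ (j : ℕ)),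
      (2 * ∑ α : Fin m, ⟪(A α) (e i), e j⟫ ^ 2
        - ∑ α : Fin m, ⟪(A α) (e i), e i⟫ * ⟪(A α) (e j), e j⟫)

/-- The quantity `T_p = Σ_α (tr A_α) Σ_{i≤p} ⟨A_α e_i, e_i⟩`. -/
noncomputable def Tsum {V : Type*} [NormedAddCommGroup V] [InnerProductSpace ℝ V]
    (m : ℕ) {n : ℕ} (p : ℕ) (A : Fin m → V →ₗ[ℝ] V)
    (e : OrthonormalBasis (Fin n) ℝ V) : ℝ :=
  ∑ α : Fin m, LinearMap.trace ℝ V (A α) *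
    ∑ i ∈ Finset.univ.filter (fun i : Fin n => (i : ℕ) < p), ⟪(A α) (e i), e i⟫

/-- The squared length `S = Σ_α tr(A_α²)` of the second fundamental form. -/
noncomputable def Ssec {V : Type*} [NormedAddCommGroup V] [InnerProductSpace ℝ V]
    (m : ℕ) (A : Fin m → V →ₗ[ℝ] V) : ℝ :=
  ∑ α : Fin m, LinearMap.trace ℝ V (A α ∘ₗ A α)


private lemma sum_split_zero {n : ℕ} (hn0 : 0 < n) (f : Fin n → ℝ) :
    ∑ i : Fin n, f i
      = f ⟨0, hn0⟩ + ∑ i ∈ Finset.univ.filter (fun i : Fin n => 1 ≤ (i : ℕ)), f i := by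
  have h : Finset.univ.filter (fun i : Fin n => ¬ 1 ≤ (i : ℕ)) = {(⟨0, hn0⟩ : Fin n)} := by
    ext i
    simp only [Finset.mem_filter, Finset.mem_univ, true_and, Finset.mem_singleton, Fin.ext_iff]
    omega
  rw [← Finset.sum_filter_add_sum_filter_not Finset.univ (fun i : Fin n => 1 ≤ (i : ℕ)) f, h,
    Finset.sum_singleton]
  ring

private lemma trace_onb {V : Type*} [NormedAddCommGroup V] [InnerProductSpace ℝ V]
    [FiniteDimensional ℝ V] {n : ℕ} (e : OrthonormalBasis (Fin n) ℝ V) (T : V →ₗ[ℝ] V) :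
    LinearMap.trace ℝ V T = ∑ i : Fin n, ⟪T (e i), e i⟫ := by
  rw [LinearMap.trace_eq_matrix_trace ℝ e.toBasis, Matrix.trace]
  apply Finset.sum_congr rfl
  intro i _
  rw [Matrix.diag_apply, LinearMap.toMatrix_apply, OrthonormalBasis.coe_toBasis,
    OrthonormalBasis.coe_toBasis_repr_apply, OrthonormalBasis.repr_apply_apply, real_inner_comm]

private lemma key_ineq {n m : ℕ} (hn : 4 ≤ n) (M : Fin m → Fin n → Fin n → ℝ)
    (hsym : ∀ α i j, M α i j = M α j i) (c H : ℝ)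
    (hHdef : (n : ℝ) ^ 2 * H ^ 2 = ∑ α : Fin m, (∑ i : Fin n, M α i i) ^ 2)
    (hRic : ∀ j : Fin n, ((n : ℝ) - 1) * c + (∑ α : Fin m, (∑ i : Fin n, M α i i) * M α j j)
        - (∑ α : Fin m, ∑ k : Fin n, M α j k ^ 2)
        > (n : ℝ) * ((n : ℝ) - 1) / ((n : ℝ) + 2) * (c + H ^ 2)) :
    ∑ j ∈ Finset.univ.filter (fun j : Fin n => 1 ≤ (j : ℕ)),
        (2 * ∑ α : Fin m, M α ⟨0, by omega⟩ j ^ 2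
          - ∑ α : Fin m, M α ⟨0, by omega⟩ ⟨0, by omega⟩ * M α j j)
      < ((n : ℝ) - 1) * c := by
  have hn0 : 0 < n := by omega
  show ∑ j ∈ Finset.univ.filter (fun j : Fin n => 1 ≤ (j : ℕ)),
        (2 * ∑ α : Fin m, M α ⟨0, hn0⟩ j ^ 2
          - ∑ α : Fin m, M α ⟨0, hn0⟩ ⟨0, hn0⟩ * M α j j)
      < ((n : ℝ) - 1) * c
  have hN4 : (4 : ℝ) ≤ (n : ℝ) := by exact_mod_cast hn
  have hNpos : (0 : ℝ) < (n : ℝ) := by linarith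
  have hNne : ((n : ℝ)) ≠ 0 := ne_of_gt hNpos
  have hN2pos : (0 : ℝ) < (n : ℝ) + 2 := by linarith
  set z : Fin n := ⟨0, hn0⟩ with hzdef
  set F1 : Finset (Fin n) := Finset.univ.filter (fun j : Fin n => 1 ≤ (j : ℕ)) with hF1
  have hsplit : ∀ f : Fin n → ℝ, ∑ i : Fin n, f i = f z + ∑ i ∈ F1, f i :=
    fun f => sum_split_zero hn0 f
  -- Step 1 : rewrite the goal's left hand side
  have hLHS : ∑ j ∈ F1, (2 * ∑ α : Fin m, M α z j ^ 2 - ∑ α : Fin m, M α z z * M α j j)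
      = 2 * (∑ α : Fin m, ∑ j ∈ F1, M α z j ^ 2)
        - ∑ α : Fin m, M α z z * ((∑ i : Fin n, M α i i) - M α z z) := by
    rw [Finset.sum_sub_distrib]
    congr 1
    · rw [← Finset.mul_sum, Finset.sum_comm]
    · rw [Finset.sum_comm]
      refine Finset.sum_congr rfl (fun α _ => ?_)
      have hTα : ∑ i : Fin n, M α i i = M α z z + ∑ j ∈ F1, M α j j :=
        hsplit (fun i => M α i i)
      rw [hTα, ← Finset.mul_sum]
      ring
  -- Step 2 : the Ricci curvature in the direction z
  have hRzlt : (n : ℝ) * ((n : ℝ) - 1) / ((n : ℝ) + 2) * (c + H ^ 2)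
      < ((n : ℝ) - 1) * c + (∑ α : Fin m, (∑ i : Fin n, M α i i) * M α z z)
        - (∑ α : Fin m, (M α z z ^ 2 + ∑ j ∈ F1, M α z j ^ 2)) := by
    have h := hRic z
    have e1 : ∑ α : Fin m, ∑ k : Fin n, M α z k ^ 2
        = ∑ α : Fin m, (M α z z ^ 2 + ∑ j ∈ F1, M α z j ^ 2) :=
      Finset.sum_congr rfl (fun α _ => hsplit (fun k => M α z k ^ 2))
    rw [e1] at h
    exact h
  -- Step 3 : per-α lower bound for the full square sum
  have pb : ∀ α : Fin m,
      2 * (∑ j ∈ F1, M α z j ^ 2) + (∑ i : Fin n, M α i i) ^ 2 / (n : ℝ)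
        ≤ ∑ i : Fin n, ∑ j : Fin n, M α i j ^ 2 := by
    intro α
    have hdiag : (∑ i : Fin n, M α i i) ^ 2 ≤ (n : ℝ) * ∑ i : Fin n, M α i i ^ 2 := by
      have h := sq_sum_le_card_mul_sum_sq (s := (Finset.univ : Finset (Fin n)))
        (f := fun i : Fin n => M α i i)
      simpa using h
    have hdiag' : (∑ i : Fin n, M α i i) ^ 2 / (n : ℝ) ≤ ∑ i : Fin n, M α i i ^ 2 := by
      rw [div_le_iff₀ hNpos]
      calc (∑ i : Fin n, M α i i) ^ 2 ≤ (n : ℝ) * ∑ i : Fin n, M α i i ^ 2 := hdiag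
        _ = (∑ i : Fin n, M α i i ^ 2) * (n : ℝ) := by ring
    have hrow : ∀ i ∈ F1, M α i z ^ 2 + M α i i ^ 2 ≤ ∑ j : Fin n, M α i j ^ 2 := by
      intro i hi
      have hne : z ≠ i := by
        intro h
        rw [hF1] at hi
        simp only [Finset.mem_filter, Finset.mem_univ, true_and] at hi
        rw [← h] at hi
        simp [hzdef] at hi
      have h := Finset.sum_le_sum_of_subset_of_nonneg
        (Finset.subset_univ ({z, i} : Finset (Fin n)))
        (f := fun j : Fin n => M α i j ^ 2) (fun j _ _ => sq_nonneg _)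
      rw [Finset.sum_pair hne] at h
      linarith [h]
    have hblock : ∑ i ∈ F1, (M α i z ^ 2 + M α i i ^ 2)
        ≤ ∑ i ∈ F1, ∑ j : Fin n, M α i j ^ 2 := Finset.sum_le_sum hrow
    have hsplitq : ∑ i ∈ F1, (M α i z ^ 2 + M α i i ^ 2)
        = (∑ j ∈ F1, M α z j ^ 2) + ∑ i ∈ F1, M α i i ^ 2 := by
      rw [Finset.sum_add_distrib]
      congr 1
      exact Finset.sum_congr rfl (fun i _ => by rw [hsym α i z])
    have htot : ∑ i : Fin n, ∑ j : Fin n, M α i j ^ 2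
        = (∑ j : Fin n, M α z j ^ 2) + ∑ i ∈ F1, ∑ j : Fin n, M α i j ^ 2 :=
      hsplit (fun i => ∑ j : Fin n, M α i j ^ 2)
    have hrow0 : ∑ j : Fin n, M α z j ^ 2 = M α z z ^ 2 + ∑ j ∈ F1, M α z j ^ 2 :=
      hsplit (fun j => M α z j ^ 2)
    have hdiagsplit : ∑ i : Fin n, M α i i ^ 2 = M α z z ^ 2 + ∑ i ∈ F1, M α i i ^ 2 :=
      hsplit (fun i => M α i i ^ 2)
    rw [htot, hrow0]
    rw [hdiagsplit] at hdiag'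
    linarith [hblock, hsplitq]
  -- Step 4 : the scalar curvature bound
  have hscal : (n : ℝ) * ((n : ℝ) * ((n : ℝ) - 1) / ((n : ℝ) + 2) * (c + H ^ 2))
      < (n : ℝ) * ((n : ℝ) - 1) * c + (n : ℝ) ^ 2 * H ^ 2
        - ∑ α : Fin m, ∑ i : Fin n, ∑ j : Fin n, M α i j ^ 2 := by
    have hsum : ∑ j : Fin n, (((n : ℝ) - 1) * c
          + (∑ α : Fin m, (∑ i : Fin n, M α i i) * M α j j)
          - (∑ α : Fin m, ∑ k : Fin n, M α j k ^ 2))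
        = (n : ℝ) * ((n : ℝ) - 1) * c + (∑ α : Fin m, (∑ i : Fin n, M α i i) ^ 2)
          - ∑ α : Fin m, ∑ i : Fin n, ∑ j : Fin n, M α i j ^ 2 := by
      rw [Finset.sum_sub_distrib, Finset.sum_add_distrib]
      congr 1
      · congr 1
        · rw [Finset.sum_const, Finset.card_univ, Fintype.card_fin, nsmul_eq_mul]
          ring
        · rw [Finset.sum_comm]
          refine Finset.sum_congr rfl (fun α _ => ?_)
          rw [← Finset.mul_sum, sq]
      · rw [Finset.sum_comm]
    have hlt : ∑ j : Fin n, ((n : ℝ) * ((n : ℝ) - 1) / ((n : ℝ) + 2) * (c + H ^ 2))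
        < ∑ j : Fin n, (((n : ℝ) - 1) * c
          + (∑ α : Fin m, (∑ i : Fin n, M α i i) * M α j j)
          - (∑ α : Fin m, ∑ k : Fin n, M α j k ^ 2)) := by
      apply Finset.sum_lt_sum_of_nonempty ⟨z, Finset.mem_univ z⟩
      intro j _
      exact hRic j
    rw [hsum, Finset.sum_const, Finset.card_univ, Fintype.card_fin, nsmul_eq_mul, ← hHdef] at hlt
    linarith [hlt]
  -- Step 5 : summing the per-α bounds
  have h2a2 : 2 * (∑ α : Fin m, ∑ j ∈ F1, M α z j ^ 2) + (n : ℝ) * H ^ 2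
      ≤ ∑ α : Fin m, ∑ i : Fin n, ∑ j : Fin n, M α i j ^ 2 := by
    have hsumpb := Finset.sum_le_sum (fun α (_ : α ∈ (Finset.univ : Finset (Fin m))) => pb α)
    rw [Finset.sum_add_distrib] at hsumpb
    have h1 : ∑ α : Fin m, 2 * (∑ j ∈ F1, M α z j ^ 2)
        = 2 * ∑ α : Fin m, ∑ j ∈ F1, M α z j ^ 2 := by
      rw [Finset.mul_sum]
    have h2 : ∑ α : Fin m, (∑ i : Fin n, M α i i) ^ 2 / (n : ℝ) = (n : ℝ) * H ^ 2 := by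
      rw [← Finset.sum_div, ← hHdef]
      field_simp
    rw [h1, h2] at hsumpb
    exact hsumpb
  -- Step 6 : conclude
  have ha2lt : (∑ α : Fin m, ∑ j ∈ F1, M α z j ^ 2)
      < (n : ℝ) * ((n : ℝ) - 1) / ((n : ℝ) + 2) * (c + H ^ 2) := by
    have hkey : (n : ℝ) * ((n : ℝ) - 1) * c + (n : ℝ) ^ 2 * H ^ 2 - (n : ℝ) * H ^ 2
        = ((n : ℝ) + 2) * ((n : ℝ) * ((n : ℝ) - 1) / ((n : ℝ) + 2) * (c + H ^ 2)) := by
      field_simp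
      ring
    nlinarith [h2a2, hscal]
  have hfin : (∑ α : Fin m, M α z z * ((∑ i : Fin n, M α i i) - M α z z))
      = (∑ α : Fin m, (∑ i : Fin n, M α i i) * M α z z)
        - (∑ α : Fin m, (M α z z ^ 2 + ∑ j ∈ F1, M α z j ^ 2))
        + (∑ α : Fin m, ∑ j ∈ F1, M α z j ^ 2) := by
    rw [← Finset.sum_sub_distrib, ← Finset.sum_add_distrib]
    refine Finset.sum_congr rfl (fun α _ => ?_)
    ring
  rw [hLHS, hfin]
  linarith [hRzlt, ha2lt]

theorem lemma_three_estimate_strict {V : Type*} [NormedAddCommGroup V] [InnerProductSpace ℝ V]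
    [FiniteDimensional ℝ V] (n m : ℕ)
    (hdim : Module.finrank ℝ V = n)
    (A : Fin m → V →ₗ[ℝ] V) (hsymm : ∀ α : Fin m, (A α).IsSymmetric)
    (c H : ℝ) (hH : 0 ≤ H)
    (hHdef : (n : ℝ) ^ 2 * H ^ 2 = ∑ α : Fin m, (LinearMap.trace ℝ V (A α)) ^ 2)
    (hn : 4 ≤ n)
    (hRic : ∀ X : V, ‖X‖ = 1 →
      RicCurv m n c A X > (n : ℝ) * ((n : ℝ) - 1) / ((n : ℝ) + 2) * (c + H ^ 2)) :
    ∀ e : OrthonormalBasis (Fin n) ℝ V,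
      ∑ j ∈ Finset.univ.filter (fun j : Fin n => 1 ≤ (j : ℕ)),
        (2 * ∑ α : Fin m, ⟪(A α) (e ⟨0, by omega⟩), e j⟫ ^ 2
          - ∑ α : Fin m, ⟪(A α) (e ⟨0, by omega⟩), e ⟨0, by omega⟩⟫ * ⟪(A α) (e j), e j⟫)
      < ((n : ℝ) - 1) * c := by
  intro e
  have hsym' : ∀ (α : Fin m) (i j : Fin n), ⟪A α (e i), e j⟫ = ⟪A α (e j), e i⟫ := by
    intro α i j
    rw [hsymm α (e i) (e j), real_inner_comm]
  have htr : ∀ α : Fin m, LinearMap.trace ℝ V (A α) = ∑ i : Fin n, ⟪A α (e i), e i⟫ :=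
    fun α => trace_onb e (A α)
  have hPar : ∀ (α : Fin m) (j : Fin n),
      ‖A α (e j)‖ ^ 2 = ∑ k : Fin n, ⟪A α (e j), e k⟫ ^ 2 := by
    intro α j
    rw [← real_inner_self_eq_norm_sq,
      ← OrthonormalBasis.sum_inner_mul_inner e (A α (e j)) (A α (e j))]
    refine Finset.sum_congr rfl (fun k _ => ?_)
    rw [real_inner_comm (e k)]
    ring
  have hHdef' : (n : ℝ) ^ 2 * H ^ 2
      = ∑ α : Fin m, (∑ i : Fin n, ⟪A α (e i), e i⟫) ^ 2 := by
    rw [hHdef]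
    exact Finset.sum_congr rfl (fun α _ => by rw [htr α])
  have hRic' : ∀ j : Fin n, ((n : ℝ) - 1) * c
      + (∑ α : Fin m, (∑ i : Fin n, ⟪A α (e i), e i⟫) * ⟪A α (e j), e j⟫)
      - (∑ α : Fin m, ∑ k : Fin n, ⟪A α (e j), e k⟫ ^ 2)
      > (n : ℝ) * ((n : ℝ) - 1) / ((n : ℝ) + 2) * (c + H ^ 2) := by
    intro j
    have h := hRic (e j) (e.orthonormal.1 j)
    simp only [RicCurv, htr, hPar] at h
    exact h
  exact key_ineq hn (fun α i j => ⟪A α (e i), e j⟫) hsym' c H hHdef' hRic'
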